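/- For every integer k ≥ 2, the Euclidean distance in ℝ³ between the segment joining (0,0,0) and (k−1,k,k) and the segment joining (k,1,2) and (0,k,k−1) equals 1/√(2(2k²−4k+5)(2k²−2k+1)). -/

import Mathlib

/-- The infimum of Euclidean distances between points of two sets. -/
noncomputable def setDist {E : Type*} [PseudoMetricSpace E] (P Q : Set E) : ℝ :=
  sInf (Set.image2 dist P Q)

lemma dist_formula_aux (t s K : ℝ) :
    dist ((1-t) • (WithLp.equiv 2 (Fin 3 → ℝ)).symm ![0,0,0] + t • (WithLp.equiv 2 (Fin 3 → ℝ)).symm ![K-1,K,K])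
      ((1-s) • (WithLp.equiv 2 (Fin 3 → ℝ)).symm ![K,1,2] + s • (WithLp.equiv 2 (Fin 3 → ℝ)).symm ![0,K,K-1])
    = Real.sqrt ((t*(K-1)-(1-s)*K)^2 + (t*K-((1-s)+s*K))^2 + (t*K-(2*(1-s)+s*(K-1)))^2) := by
  rw [EuclideanSpace.dist_eq]
  congr 1
  rw [Fin.sum_univ_three]
  simp only [PiLp.add_apply, PiLp.smul_apply, WithLp.equiv_symm_apply, PiLp.toLp_apply, smul_eq_mul,
    Matrix.cons_val_zero, Matrix.cons_val_one, Matrix.head_cons, Matrix.cons_val_two,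
    Matrix.tail_cons, Real.dist_eq]
  rw [sq_abs, sq_abs, sq_abs]
  ring

lemma key_ineq_aux (K t s : ℝ) (hK : 2 ≤ K) :
    1 / (2 * (2*K^2 - 4*K + 5) * (2*K^2 - 2*K + 1)) ≤
      (t*(K-1)-(1-s)*K)^2 + (t*K-((1-s)+s*K))^2 + (t*K-(2*(1-s)+s*(K-1)))^2 := by
  set det : ℝ := 2 * (2*K^2 - 4*K + 5) * (2*K^2 - 2*K + 1) with hdetdef
  have hdet : 0 < det := by nlinarith [sq_nonneg (K-2), sq_nonneg (K-1), sq_nonneg K]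
  have hatt : (0:ℝ) < 3*K^2 - 2*K + 1 := by nlinarith [sq_nonneg (K-1)]
  rw [div_le_iff₀ hdet]
  set f : ℝ := (t*(K-1)-(1-s)*K)^2 + (t*K-((1-s)+s*K))^2 + (t*K-(2*(1-s)+s*(K-1)))^2 with hf
  set u : ℝ := det*t - (4*K^4 - 8*K^3 + 10*K^2 - K) with hu
  set v : ℝ := det*s - (4*K^4 - 12*K^3 + 22*K^2 - 17*K + 7) with hv
  have hid : (3*K^2 - 2*K + 1) * det * (det * f - 1)
      = ((3*K^2-2*K+1)*u + (3*K - K^2)*v)^2 + det * v^2 := by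
    rw [hf, hu, hv, hdetdef]; ring
  nlinarith [sq_nonneg ((3*K^2-2*K+1)*u + (3*K - K^2)*v), mul_nonneg hdet.le (sq_nonneg v),
    mul_pos hatt hdet, hid]

theorem stmt_11 (k : ℤ) (hk : 2 ≤ k) :
    setDist (segment ℝ ((WithLp.equiv 2 (Fin 3 → ℝ)).symm ![0, 0, 0]) ((WithLp.equiv 2 (Fin 3 → ℝ)).symm ![(k : ℝ) - 1, (k : ℝ), (k : ℝ)]))
        (segment ℝ ((WithLp.equiv 2 (Fin 3 → ℝ)).symm ![(k : ℝ), 1, 2]) ((WithLp.equiv 2 (Fin 3 → ℝ)).symm ![0, (k : ℝ), (k : ℝ) - 1])) =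
      1 / Real.sqrt (2 * (2 * (k : ℝ) ^ 2 - 4 * k + 5) * (2 * (k : ℝ) ^ 2 - 2 * k + 1)) := by
  set K : ℝ := (k : ℝ) with hKdef
  have hK : (2:ℝ) ≤ K := by rw [hKdef]; exact_mod_cast hk
  set det : ℝ := 2 * (2*K^2 - 4*K + 5) * (2*K^2 - 2*K + 1) with hdetdef
  have hdet : 0 < det := by nlinarith [sq_nonneg (K-2), sq_nonneg (K-1), sq_nonneg K]
  have hgoal_rhs : 1 / Real.sqrt det = Real.sqrt (1 / det) := by
    rw [one_div, one_div, Real.sqrt_inv]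
  rw [hgoal_rhs]
  unfold setDist
  rw [segment_eq_image ℝ, segment_eq_image ℝ]
  apply le_antisymm
  · -- sInf ≤ value : use the optimal point
    set t₀ : ℝ := (4*K^4 - 8*K^3 + 10*K^2 - K) / det with ht₀
    set s₀ : ℝ := (4*K^4 - 12*K^3 + 22*K^2 - 17*K + 7) / det with hs₀
    have ht0 : 0 ≤ t₀ := by
      apply div_nonneg _ hdet.le
      nlinarith [sq_nonneg (K-2), sq_nonneg K, mul_nonneg (sub_nonneg.2 hK) (sq_nonneg K)]
    have ht1 : t₀ ≤ 1 := by
      rw [div_le_one hdet]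
      nlinarith [sq_nonneg (K-2), mul_nonneg (sub_nonneg.2 hK) (sq_nonneg (K-2)),
        mul_nonneg (mul_nonneg (sub_nonneg.2 hK) (sub_nonneg.2 hK)) (sq_nonneg (K-2)), sq_nonneg (K-1)]
    have hs0 : 0 ≤ s₀ := by
      apply div_nonneg _ hdet.le
      nlinarith [sq_nonneg (K-2), mul_nonneg (sub_nonneg.2 hK) (sq_nonneg (K-2)), sq_nonneg (K-1)]
    have hs1 : s₀ ≤ 1 := by
      rw [div_le_one hdet]
      nlinarith [sq_nonneg (K-2), mul_nonneg (sub_nonneg.2 hK) (sq_nonneg (K-2)),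
        mul_nonneg (mul_nonneg (sub_nonneg.2 hK) (sub_nonneg.2 hK)) (sq_nonneg (K-2)), sq_nonneg (K-1)]
    apply csInf_le
    · exact ⟨0, by rintro r ⟨x, _, y, _, rfl⟩; exact dist_nonneg⟩
    · have hx := Set.mem_image_of_mem
        (fun θ : ℝ => (1-θ) • (WithLp.equiv 2 (Fin 3 → ℝ)).symm ![0,0,0] + θ • (WithLp.equiv 2 (Fin 3 → ℝ)).symm ![K-1,K,K])
        (Set.mem_Icc.mpr ⟨ht0, ht1⟩)
      have hy := Set.mem_image_of_mem
        (fun θ : ℝ => (1-θ) • (WithLp.equiv 2 (Fin 3 → ℝ)).symm ![K,1,2] + θ • (WithLp.equiv 2 (Fin 3 → ℝ)).symm ![0,K,K-1])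
        (Set.mem_Icc.mpr ⟨hs0, hs1⟩)
      have hval : Real.sqrt (1 / det) = dist
          ((1-t₀) • (WithLp.equiv 2 (Fin 3 → ℝ)).symm ![0,0,0] + t₀ • (WithLp.equiv 2 (Fin 3 → ℝ)).symm ![K-1,K,K])
          ((1-s₀) • (WithLp.equiv 2 (Fin 3 → ℝ)).symm ![K,1,2] + s₀ • (WithLp.equiv 2 (Fin 3 → ℝ)).symm ![0,K,K-1]) := by
        rw [dist_formula_aux]
        congr 1
        rw [ht₀, hs₀, hdetdef]
        have h0 : (2 * (2*K^2 - 4*K + 5) * (2*K^2 - 2*K + 1)) ≠ 0 := by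
          rw [← hdetdef]; exact hdet.ne'
        have h1' : K * (2 * K - 4) + 5 ≠ 0 := by nlinarith [sq_nonneg (K-1)]
        have h2' : 2 * K * (K - 1) + 1 ≠ 0 := by nlinarith [sq_nonneg (K-1)]
        field_simp
        ring
      rw [hval]
      exact Set.mem_image2_of_mem hx hy
  · -- lower bound
    apply le_csInf
    · exact ⟨_, Set.mem_image2_of_mem ⟨0, ⟨le_refl 0, zero_le_one⟩, rfl⟩
        ⟨0, ⟨le_refl 0, zero_le_one⟩, rfl⟩⟩
    · rintro r ⟨x, ⟨t, ⟨ht0, ht1⟩, rfl⟩, y, ⟨s, ⟨hs0, hs1⟩, rfl⟩, rfl⟩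
      rw [dist_formula_aux]
      exact Real.sqrt_le_sqrt (key_ineq_aux K t s hK)
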